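/- arXiv:1401.2665 — 4 statements merged into one kernel-verified Lean document; each statement's English description precedes it below -/
import Mathlib

section
/- Let r ≥ 1 and let Δ₁, …, Δ_r be positive real numbers. For every ε > 0 there exist positive integers k₁, …, k_r such that |Δ_i k_i − Δ_j k_j| < ε for all i, j ∈ {1, …, r}. -/
/-- Simultaneous Dirichlet approximation via pigeonhole: for any finite family of
reals `α` and `δ > 0` there is a positive integer `q` and integers `p i` with
`|q * α i - p i| < δ` for all `i`. -/
lemma dirichlet_simultaneous (r : ℕ) (α : Fin r → ℝ) {δ : ℝ} (hδ : 0 < δ) :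
    ∃ (q : ℕ) (p : Fin r → ℤ), 0 < q ∧ ∀ i, |(q : ℝ) * α i - p i| < δ := by
  obtain ⟨N, hN⟩ := exists_nat_gt (1 / δ)
  have hN0 : 0 < N := by
    by_contra h
    push_neg at h
    interval_cases N
    simp at hN
    linarith [one_div_pos.mpr hδ]
  have hNR : (0 : ℝ) < N := by exact_mod_cast hN0
  have hδN : 1 / (N : ℝ) < δ := by
    rw [div_lt_iff₀ hNR]
    have := (div_lt_iff₀ hδ).mp hN
    linarith
  -- pigeonhole map
  have hfloor : ∀ (n : Fin (N ^ r + 1)) (i : Fin r),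
      (⌊(N : ℝ) * Int.fract ((n : ℕ) * α i)⌋).toNat < N := by
    intro n i
    have h1 : (N : ℝ) * Int.fract ((n : ℕ) * α i) < N := by
      have := Int.fract_lt_one ((n : ℕ) * α i)
      nlinarith
    have h2 : ⌊(N : ℝ) * Int.fract ((n : ℕ) * α i)⌋ < (N : ℤ) := by
      exact Int.floor_lt.mpr (by exact_mod_cast h1)
    omega
  set f : Fin (N ^ r + 1) → (Fin r → Fin N) :=
    fun n i => ⟨(⌊(N : ℝ) * Int.fract ((n : ℕ) * α i)⌋).toNat, hfloor n i⟩ with hf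
  have hcard : Fintype.card (Fin r → Fin N) < Fintype.card (Fin (N ^ r + 1)) := by
    simp [Fintype.card_fun]
  obtain ⟨a, b, hab, hfab⟩ := Fintype.exists_ne_map_eq_of_card_lt f hcard
  -- wlog a < b
  wlog hlt : (a : ℕ) < (b : ℕ) generalizing a b
  · exact this b a hab.symm hfab.symm (by
      rcases lt_or_gt_of_ne (fun h : (a : ℕ) = (b : ℕ) => hab (Fin.ext h)) with h | h
      · exact absurd h hlt
      · exact h)
  refine ⟨(b : ℕ) - (a : ℕ),
    fun i => ⌊((b : ℕ) : ℝ) * α i⌋ - ⌊((a : ℕ) : ℝ) * α i⌋, by omega, fun i => ?_⟩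
  have hfi : f a i = f b i := by rw [hfab]
  have hfloorEq : ⌊(N : ℝ) * Int.fract ((a : ℕ) * α i)⌋
      = ⌊(N : ℝ) * Int.fract ((b : ℕ) * α i)⌋ := by
    have h0a : 0 ≤ ⌊(N : ℝ) * Int.fract ((a : ℕ) * α i)⌋ :=
      Int.floor_nonneg.mpr (mul_nonneg hNR.le (Int.fract_nonneg _))
    have h0b : 0 ≤ ⌊(N : ℝ) * Int.fract ((b : ℕ) * α i)⌋ :=
      Int.floor_nonneg.mpr (mul_nonneg hNR.le (Int.fract_nonneg _))
    have := congrArg Fin.val hfi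
    simp only [hf] at this
    omega
  have habs := Int.abs_sub_lt_one_of_floor_eq_floor hfloorEq
  have hfr : |Int.fract ((a : ℕ) * α i) - Int.fract ((b : ℕ) * α i)| < 1 / N := by
    rw [lt_div_iff₀ hNR]
    calc |Int.fract ((a : ℕ) * α i) - Int.fract ((b : ℕ) * α i)| * N
        = |(N : ℝ) * Int.fract ((a : ℕ) * α i) - (N : ℝ) * Int.fract ((b : ℕ) * α i)| := by
          rw [← mul_sub, abs_mul, abs_of_pos hNR, mul_comm]
      _ < 1 := habs
  have hkey : ((((b : ℕ) - (a : ℕ) : ℕ)) : ℝ) * α i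
      - ((⌊((b : ℕ) : ℝ) * α i⌋ - ⌊((a : ℕ) : ℝ) * α i⌋ : ℤ) : ℝ)
      = Int.fract (((b : ℕ) : ℝ) * α i) - Int.fract (((a : ℕ) : ℝ) * α i) := by
    have hcast : ((((b : ℕ) - (a : ℕ) : ℕ)) : ℝ) = ((b : ℕ) : ℝ) - ((a : ℕ) : ℝ) := by
      have : (a : ℕ) ≤ (b : ℕ) := hlt.le
      push_cast [this]
      ring
    rw [hcast]
    unfold Int.fract
    push_cast
    ring
  rw [hkey]
  rw [abs_sub_comm] at hfr
  exact hfr.trans hδN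

/-- Simultaneous Diophantine approximation core of Lemma 3.1:
for positive reals `Δ₁, …, Δ_r` and any `ε > 0` there are positive integers
`k₁, …, k_r` with `|Δ_i k_i − Δ_j k_j| < ε` for all `i, j`. -/
theorem perfect_reeb_stmt0 (r : ℕ) (hr : 1 ≤ r) (Δ : Fin r → ℝ)
    (hΔ : ∀ i, 0 < Δ i) (ε : ℝ) (hε : 0 < ε) :
    ∃ k : Fin r → ℕ, (∀ i, 0 < k i) ∧
      ∀ i j, |Δ i * (k i : ℝ) - Δ j * (k j : ℝ)| < ε := by
  have hr' : 0 < r := hr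
  set i0 : Fin r := ⟨0, hr'⟩ with hi0
  set α : Fin r → ℝ := fun i => Δ i0 / Δ i with hα
  have hαpos : ∀ i, 0 < α i := fun i => div_pos (hΔ i0) (hΔ i)
  -- choose δ small enough
  have hNe : Nonempty (Fin r) := ⟨i0⟩
  have hne : (Finset.univ : Finset (Fin r)).Nonempty := Finset.univ_nonempty
  set δ : ℝ := Finset.min' (Finset.univ.image (fun i => min (α i) (ε / (2 * Δ i))))
      (hne.image _) with hδdef
  have hδmem : ∀ i, δ ≤ min (α i) (ε / (2 * Δ i)) := by
    intro i
    apply Finset.min'_le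
    exact Finset.mem_image_of_mem _ (Finset.mem_univ i)
  have hδpos : 0 < δ := by
    obtain ⟨x, hx, hxe⟩ := Finset.mem_image.mp (Finset.min'_mem _ (hne.image
      (fun i => min (α i) (ε / (2 * Δ i)))))
    rw [hδdef, ← hxe]
    exact lt_min (hαpos x) (div_pos hε (by linarith [hΔ x]))
  obtain ⟨q, p, hq, hp⟩ := dirichlet_simultaneous r α hδpos
  -- p i ≥ 1
  have hp1 : ∀ i, 1 ≤ p i := by
    intro i
    have h := hp i
    rw [abs_lt] at h
    have hq1 : (1 : ℝ) ≤ (q : ℝ) := by exact_mod_cast hq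
    have : ((p i : ℝ)) > (q : ℝ) * α i - δ := by linarith [h.2]
    have hδα : δ ≤ α i := (hδmem i).trans (min_le_left _ _)
    have hpi : (0 : ℝ) < (p i : ℝ) := by nlinarith [hαpos i]
    have : (0 : ℤ) < p i := by exact_mod_cast hpi
    omega
  refine ⟨fun i => (p i).toNat, fun i => by have h := hp1 i; show 0 < (p i).toNat; omega, fun i j => ?_⟩
  have hcast : ∀ i, (((p i).toNat : ℕ) : ℝ) = ((p i : ℝ)) := by
    intro i
    have h1 := hp1 i
    have h0 : (0:ℤ) ≤ p i := by omega
    exact_mod_cast congrArg (fun z : ℤ => (z : ℝ)) (Int.toNat_of_nonneg h0)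
  have hclose : ∀ i, |Δ i * ((p i : ℝ)) - Δ i0 * q| < ε / 2 := by
    intro i
    have h := hp i
    have hΔi := hΔ i
    have hαi : Δ i * α i = Δ i0 := by
      show Δ i * (Δ i0 / Δ i) = Δ i0
      field_simp
    have heq : Δ i * ((p i : ℝ)) - Δ i0 * q = -(Δ i * ((q : ℝ) * α i - (p i : ℝ))) := by
      field_simp [hα, (hΔ i).ne']
      linear_combination (q : ℝ) * hαi
    rw [heq, abs_neg, abs_mul, abs_of_pos hΔi]
    have hδε : δ ≤ ε / (2 * Δ i) := (hδmem i).trans (min_le_right _ _)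
    calc Δ i * |(q : ℝ) * α i - (p i : ℝ)| < Δ i * δ := by
          exact (mul_lt_mul_iff_right₀ hΔi).mpr h
      _ ≤ Δ i * (ε / (2 * Δ i)) := by exact (mul_le_mul_iff_right₀ hΔi).mpr hδε
      _ = ε / 2 := by field_simp
  rw [hcast i, hcast j]
  calc |Δ i * ((p i : ℝ)) - Δ j * ((p j : ℝ))|
      ≤ |Δ i * ((p i : ℝ)) - Δ i0 * q| + |Δ i0 * q - Δ j * ((p j : ℝ))| := abs_sub_le _ _ _
    _ < ε / 2 + ε / 2 := by
        have h1 := hclose i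
        have h2 := hclose j
        rw [abs_sub_comm] at h2
        exact add_lt_add h1 h2
    _ = ε := by ring
end

section
/- Let r ≥ 1, let c > 0 and ε > 0, let Δ₁, …, Δ_r be positive real numbers, and for each i ∈ {1, …, r} let μ_i : ℕ_{>0} → ℤ be a function satisfying |μ_i(k) − k·Δ_i| < c for all positive integers k. Then there exist positive integers k₁, …, k_r such that |μ_i(k_i) − μ_j(k_j)| < 2c + ε for all i, j ∈ {1, …, r}; in particular all the integers μ_1(k_1), …, μ_r(k_r) lie in an interval of length 2c + ε. -/
open Finset in
/-- Simultaneous Dirichlet approximation: for any `N > 0` and reals `ρ i`,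
there is a positive integer `q` and integers `p i` with `|q·ρ i - p i| < 1/N`. -/
lemma simul_approx {r : ℕ} (N : ℕ) (hN : 0 < N) (ρ : Fin r → ℝ) :
    ∃ q : ℕ, 0 < q ∧ ∃ p : Fin r → ℤ, ∀ i, |(q : ℝ) * ρ i - p i| < 1 / N := by
  have hN' : (0:ℝ) < N := by exact_mod_cast hN
  set f : ℕ → (Fin r → Fin N) := fun n i =>
    ⟨(⌊Int.fract ((n : ℝ) * ρ i) * N⌋).toNat, by
      rw [Int.toNat_lt (Int.floor_nonneg.mpr (mul_nonneg (Int.fract_nonneg _) hN'.le)), Int.floor_lt]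
      push_cast
      calc Int.fract ((n : ℝ) * ρ i) * N < 1 * N :=
            mul_lt_mul_of_pos_right (Int.fract_lt_one _) hN'
        _ = N := one_mul _⟩ with hf
  have hcard : (Finset.univ : Finset (Fin r → Fin N)).card < (Finset.range (N ^ r + 1)).card := by
    simp [Finset.card_univ]
  obtain ⟨a, -, b, -, hab, hfab⟩ :=
    Finset.exists_ne_map_eq_of_card_lt_of_maps_to hcard (fun n _ => Finset.mem_univ (f n))
  wlog hlt : a < b generalizing a b
  · exact this b a hab.symm hfab.symm (by omega)
  have key : ∀ i, |Int.fract ((b : ℝ) * ρ i) - Int.fract ((a : ℝ) * ρ i)| < 1 / N := by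
    intro i
    have h1 : (f a i).val = (f b i).val := by rw [hfab]
    have hfl : ⌊Int.fract ((a : ℝ) * ρ i) * N⌋ = ⌊Int.fract ((b : ℝ) * ρ i) * N⌋ := by
      have ha0 : (0:ℤ) ≤ ⌊Int.fract ((a : ℝ) * ρ i) * N⌋ :=
        Int.floor_nonneg.mpr (mul_nonneg (Int.fract_nonneg _) hN'.le)
      have hb0 : (0:ℤ) ≤ ⌊Int.fract ((b : ℝ) * ρ i) * N⌋ :=
        Int.floor_nonneg.mpr (mul_nonneg (Int.fract_nonneg _) hN'.le)
      simp only [hf] at h1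
      omega
    set x := Int.fract ((a : ℝ) * ρ i) * N with hx
    set y := Int.fract ((b : ℝ) * ρ i) * N with hy
    have hxy : |y - x| < 1 := by
      have h1 := Int.floor_le x
      have h2 := Int.lt_floor_add_one x
      have h3 := Int.floor_le y
      have h4 := Int.lt_floor_add_one y
      rw [← hfl] at h3 h4
      rw [abs_lt]; constructor <;> nlinarith
    have : Int.fract ((b : ℝ) * ρ i) - Int.fract ((a : ℝ) * ρ i) = (y - x) / N := by
      rw [hx, hy]; field_simp
    rw [this, abs_div, abs_of_pos hN', div_lt_div_iff₀ hN' hN', one_mul]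
    nlinarith
  refine ⟨b - a, by omega, fun i => ⌊(b : ℝ) * ρ i⌋ - ⌊(a : ℝ) * ρ i⌋, fun i => ?_⟩
  have hcast : ((b - a : ℕ) : ℝ) = (b : ℝ) - a := by
    push_cast [Nat.cast_sub hlt.le]; ring
  have hb := Int.fract_add_floor ((b : ℝ) * ρ i)
  have ha := Int.fract_add_floor ((a : ℝ) * ρ i)
  have : ((b - a : ℕ) : ℝ) * ρ i - ((⌊(b : ℝ) * ρ i⌋ - ⌊(a : ℝ) * ρ i⌋ : ℤ) : ℝ) =
      Int.fract ((b : ℝ) * ρ i) - Int.fract ((a : ℝ) * ρ i) := by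
    rw [hcast]; push_cast; nlinarith [hb, ha]
  rw [this]; exact key i

/-- Abstract form of Lemma 3.1: if `μ_i(k)` is within `c` of `k·Δ_i` for all
positive `k`, then there are positive integers `k₁, …, k_r` such that all
`μ_i(k_i)` lie within `2c + ε` of each other. -/
theorem perfect_reeb_stmt1 (r : ℕ) (hr : 1 ≤ r) (c ε : ℝ) (hc : 0 < c)
    (hε : 0 < ε) (Δ : Fin r → ℝ) (hΔ : ∀ i, 0 < Δ i)
    (μ : Fin r → ℕ → ℤ)
    (hμ : ∀ i, ∀ k : ℕ, 0 < k → |(μ i k : ℝ) - (k : ℝ) * Δ i| < c) :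
    ∃ k : Fin r → ℕ, (∀ i, 0 < k i) ∧
      ∀ i j, |(μ i (k i) : ℝ) - (μ j (k j) : ℝ)| < 2 * c + ε := by
  have hr0 : 0 < r := hr
  set i₀ : Fin r := ⟨0, hr0⟩
  set Δ₀ : ℝ := Δ i₀ with hΔ₀
  have hΔ₀pos : 0 < Δ₀ := hΔ i₀
  set ρ : Fin r → ℝ := fun i => Δ₀ / Δ i with hρ
  have hρpos : ∀ i, 0 < ρ i := fun i => div_pos hΔ₀pos (hΔ i)
  -- choose N large
  obtain ⟨N, hNlarge⟩ := exists_nat_gt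
    ((Finset.univ.sup' (by simp [Finset.univ_nonempty_iff]; exact ⟨i₀⟩)
      fun i => max (1 / ρ i) (2 * Δ i / ε)))
  have hNbig : ∀ i, max (1 / ρ i) (2 * Δ i / ε) < N := fun i =>
    lt_of_le_of_lt (Finset.le_sup' (fun i => max (1 / ρ i) (2 * Δ i / ε)) (Finset.mem_univ i)) hNlarge
  have hNpos : 0 < N := by
    have := hNbig i₀
    have h1 : 0 < 1 / ρ i₀ := by positivity
    have : (0:ℝ) < N := lt_trans (lt_of_lt_of_le h1 (le_max_left _ _)) this
    exact_mod_cast this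
  have hNpos' : (0:ℝ) < N := by exact_mod_cast hNpos
  obtain ⟨q, hq, p, hp⟩ := simul_approx N hNpos ρ
  -- key bounds
  have hppos : ∀ i, 0 < p i := by
    intro i
    have h1 := hp i
    have h2 : 1 / N < ρ i := by
      rw [div_lt_iff₀ hNpos'] at *
      have := lt_of_le_of_lt (le_max_left _ _) (hNbig i)
      rw [div_lt_iff₀ (hρpos i)] at this
      linarith [this]
    have hq1 : (1:ℝ) ≤ q := by exact_mod_cast hq
    have : (p i : ℝ) > 0 := by
      rw [abs_lt] at h1
      nlinarith [hρpos i]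
    exact_mod_cast this
  set k : Fin r → ℕ := fun i => (p i).toNat with hk
  have hkpos : ∀ i, 0 < k i := fun i => by
    have := hppos i; simp only [hk]; omega
  have hkcast : ∀ i, ((k i : ℕ) : ℝ) = (p i : ℝ) := by
    intro i
    simp only [hk]
    exact_mod_cast congrArg (Int.cast : ℤ → ℝ) (Int.toNat_of_nonneg (hppos i).le)
  -- each k_i Δ_i is within ε/2 of q Δ₀
  have hclose : ∀ i, |(k i : ℝ) * Δ i - (q : ℝ) * Δ₀| < ε / 2 := by
    intro i
    have h1 := hp i
    have h2 : (q : ℝ) * ρ i * Δ i = (q : ℝ) * Δ₀ := by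
      simp only [hρ]; rw [mul_assoc, div_mul_cancel₀ _ (hΔ i).ne']
    have h3 : (k i : ℝ) * Δ i - (q : ℝ) * Δ₀ = ((p i : ℝ) - (q : ℝ) * ρ i) * Δ i := by
      rw [hkcast i, ← h2]; ring
    rw [h3, abs_mul, abs_of_pos (hΔ i)]
    have h4 : |(p i : ℝ) - (q : ℝ) * ρ i| < 1 / N := by rw [abs_sub_comm]; exact h1
    have h5 : Δ i / N < ε / 2 := by
      have := lt_of_le_of_lt (le_max_right _ _) (hNbig i)
      rw [div_lt_iff₀ hε, div_lt_iff₀ hNpos'] at *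
      nlinarith
    calc |(p i : ℝ) - (q : ℝ) * ρ i| * Δ i < (1 / N) * Δ i :=
          mul_lt_mul_of_pos_right h4 (hΔ i)
      _ = Δ i / N := by ring
      _ < ε / 2 := h5
  refine ⟨k, hkpos, fun i j => ?_⟩
  have hμi := hμ i (k i) (hkpos i)
  have hμj := hμ j (k j) (hkpos j)
  have hi := hclose i
  have hj := hclose j
  rw [abs_lt] at *
  constructor <;> nlinarith
end

section
/- Let θ be a positive irrational real number, let d be an odd positive integer, and let μ : ℕ_{>0} → ℤ be a function taking only odd integer values and satisfying |μ(k) − k·θ| < 1 for all positive integers k. Then there exist a positive integer k and an odd positive integer j such that μ(k) = j·d. -/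
/-- Abstraction of the index-collision argument in the proof of Theorem 1.9:
if `θ > 0` is irrational, `d` is an odd positive integer, and `μ(k)` is an odd
integer with `|μ(k) − kθ| < 1` for all positive `k`, then some `μ(k)` is an
odd positive multiple of `d`. -/
theorem perfect_reeb_stmt9 (θ : ℝ) (hθpos : 0 < θ) (hθirr : Irrational θ)
    (d : ℤ) (hd_odd : Odd d) (hd_pos : 0 < d) (μ : ℕ → ℤ)
    (hodd : ∀ k : ℕ, 0 < k → Odd (μ k))
    (hμ : ∀ k : ℕ, 0 < k → |(μ k : ℝ) - (k : ℝ) * θ| < 1) :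
    ∃ k : ℕ, 0 < k ∧ ∃ j : ℤ, Odd j ∧ 0 < j ∧ μ k = j * d := by
  have hdR : (0 : ℝ) < (d : ℝ) := by exact_mod_cast hd_pos
  have hd1 : (1 : ℝ) ≤ (d : ℝ) := by exact_mod_cast hd_pos
  set S : AddSubgroup ℝ := AddSubgroup.closure {(2 * d : ℝ), θ}
  have hdense : Dense (S : Set ℝ) := by
    rcases S.dense_or_cyclic with h | ⟨a, ha⟩
    · exact h
    · exfalso
      have h2d : (2 * d : ℝ) ∈ S := AddSubgroup.subset_closure (by simp)
      have hθ : θ ∈ S := AddSubgroup.subset_closure (by simp)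
      rw [ha, AddSubgroup.mem_closure_singleton] at h2d hθ
      obtain ⟨m, hm⟩ := h2d
      obtain ⟨n, hn⟩ := hθ
      rw [zsmul_eq_mul] at hm hn
      have hm0 : (m : ℝ) ≠ 0 := by
        rintro h
        rw [h, zero_mul] at hm
        nlinarith
      apply hθirr
      refine ⟨(n : ℚ) / m * (2 * d), ?_⟩
      push_cast
      have hmQ : ((m : ℝ)) ≠ 0 := hm0
      field_simp
      linear_combination (-(n:ℝ)) * hm + (m:ℝ) * hn
  obtain ⟨s, hs1, hs2⟩ := hdense.exists_mem_open
    (isOpen_Ioo (a := (d : ℝ) - 1) (b := (d : ℝ) + 1))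
    ⟨(d : ℝ), by rw [Set.mem_Ioo]; constructor <;> linarith⟩
  rw [SetLike.mem_coe, AddSubgroup.mem_closure_pair] at hs1
  obtain ⟨l, b, hlb⟩ := hs1
  rw [zsmul_eq_mul, zsmul_eq_mul] at hlb
  obtain ⟨hs2a, hs2b⟩ := hs2
  have hdist : |(b : ℝ) * θ - ((1 - 2 * l : ℤ) : ℝ) * d| < 1 := by
    rw [abs_lt]
    push_cast
    constructor <;> nlinarith [hlb]
  have hb0 : b ≠ 0 := by
    rintro rfl
    have he : (1 - 2 * l : ℤ) ≠ 0 := by omega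
    have h1 : (1 : ℤ) ≤ |1 - 2 * l| := Int.one_le_abs he
    have h2 : (d : ℤ) ≤ |(1 - 2 * l) * d| := by
      rw [abs_mul, abs_of_pos hd_pos]
      nlinarith
    have h3 : ((|(1 - 2 * l) * d| : ℤ) : ℝ) < 1 := by
      push_cast [Int.cast_abs] at hdist ⊢
      simpa using hdist
    have : ((d : ℤ) : ℝ) < 1 := lt_of_le_of_lt (by exact_mod_cast h2) h3
    linarith
  set k : ℕ := b.natAbs with hk_def
  have hk0 : 0 < k := Int.natAbs_pos.2 hb0
  have hkabs : ((k : ℝ)) = |(b : ℝ)| := by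
    simp only [hk_def, Nat.cast_natAbs, Int.cast_abs]
  set m : ℤ := if 0 ≤ b then 1 - 2 * l else -(1 - 2 * l) with hm_def
  have hm_odd : Odd m := by
    rw [hm_def]; split
    · exact ⟨-l, by ring⟩
    · exact ⟨l - 1, by ring⟩
  have hkdist : |(k : ℝ) * θ - (m : ℝ) * d| < 1 := by
    rw [hm_def]
    rcases le_or_gt 0 b with h | h
    · rw [if_pos h]
      rw [hkabs, abs_of_nonneg (by exact_mod_cast h : (0:ℝ) ≤ (b:ℝ))]
      exact hdist
    · rw [if_neg (not_le.2 h)]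
      rw [hkabs, abs_of_neg (by exact_mod_cast h : (b:ℝ) < 0)]
      push_cast
      rw [← abs_neg]
      have : -(-(b:ℝ) * θ - -(1 - 2 * (l:ℝ)) * (d:ℝ)) = (b:ℝ) * θ - (1 - 2*(l:ℝ)) * d := by ring
      rw [this]
      convert hdist using 3
      push_cast; ring
  have hμk := hμ k hk0
  have hclose : |(μ k : ℝ) - (m : ℝ) * d| < 2 := by
    calc |(μ k : ℝ) - (m : ℝ) * d|
        ≤ |(μ k : ℝ) - (k : ℝ) * θ| + |(k : ℝ) * θ - (m : ℝ) * d| :=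
          abs_sub_le _ _ _
      _ < 2 := by linarith
  have hint : |μ k - m * d| < 2 := by
    have : ((|μ k - m * d| : ℤ) : ℝ) < 2 := by
      push_cast [Int.cast_abs]
      exact hclose
    exact_mod_cast this
  have heven : Even (μ k - m * d) := (hodd k hk0).sub_odd (hm_odd.mul hd_odd)
  have heq : μ k = m * d := by
    obtain ⟨c, hc⟩ := heven
    rw [abs_lt] at hint
    omega
  have hμnn : 0 ≤ μ k := by
    rw [abs_lt] at hμk
    have hkθ : 0 < (k : ℝ) * θ := by positivity
    have : (-1 : ℝ) < (μ k : ℝ) := by linarith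
    have : (-1 : ℤ) < μ k := by exact_mod_cast this
    omega
  have hmne : m ≠ 0 := by
    rintro h
    rw [h] at hm_odd
    exact (by decide : ¬ Odd (0 : ℤ)) hm_odd
  have hm_pos : 0 < m := by
    rcases lt_trichotomy m 0 with h | h | h
    · exfalso
      have : m * d < 0 := mul_neg_of_neg_of_pos h hd_pos
      omega
    · exact absurd h hmne
    · exact h
  exact ⟨k, hk0, m, hm_odd, hm_pos, heq⟩
end

section
/- Let r ≥ 1, let c > 0 and ε > 0, let Δ₁, …, Δ_r be positive real numbers such that the reciprocals 1/Δ₁, …, 1/Δ_r are linearly independent over ℚ, and for each i ∈ {1, …, r} let μ_i : ℕ_{>0} → ℤ be a function satisfying |μ_i(k) − k·Δ_i| < c for all positive integers k. Then there exist odd positive integers k₁, …, k_r such that |μ_i(k_i) − μ_j(k_j)| < 2c + ε for all i, j ∈ {1, …, r}. -/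
open Finset Complex Real




lemma sin_pow_expand (N : ℕ) (z : ℂ) :
    Complex.sin z ^ (2*N) = ∑ k ∈ Finset.range (2*N+1),
      ((-1:ℂ)^(N+k) * ((2*N).choose k) / 4^N) *
        Complex.exp ((2*(N:ℂ) - 2*k) * z * Complex.I) := by
  rw [Complex.sin, div_pow, mul_pow, sub_pow, Finset.sum_mul, Finset.sum_div]
  refine Finset.sum_congr rfl fun m hm => ?_
  rw [Finset.mem_range] at hm
  have hm' : m ≤ 2*N := by omega
  rw [← Complex.exp_nat_mul, ← Complex.exp_nat_mul]
  have h1 : (I:ℂ)^(2*N) = (-1)^N := by rw [pow_mul, Complex.I_sq]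
  have h2 : ((-1:ℂ))^(m+2*N) = (-1)^m := by
    rw [pow_add, pow_mul]; norm_num
  have key : Complex.exp ((m:ℂ) * (-z*I)) * Complex.exp ((2*N - m : ℕ) * (z*I))
      = Complex.exp ((2*(N:ℂ) - 2*m) * z * I) := by
    rw [← Complex.exp_add]
    congr 1
    push_cast [Nat.cast_sub hm']
    ring
  have h4 : ((-1:ℂ))^(N+m) = (-1)^N * (-1)^m := pow_add _ _ _
  have h5 : (2:ℂ)^(2*N) = 4^N := by rw [pow_mul]; norm_num
  rw [h1, h2, h4, h5, ← key]
  ring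


lemma abs_integral_cexp {lam : ℝ} (h : lam ≠ 0) (T : ℝ) :
    ‖∫ t in (0:ℝ)..T, Complex.exp (((2*π*lam : ℝ) : ℂ) * t * Complex.I)‖ ≤ |lam|⁻¹ := by
  have hπ := Real.pi_pos
  have hlam : 0 < |lam| := abs_pos.mpr h
  have hc : ((2*π*lam : ℝ) : ℂ) * Complex.I ≠ 0 := by
    simp [Complex.ext_iff, Real.pi_ne_zero, h]
  have heq : ∀ t : ℝ, Complex.exp (((2*π*lam : ℝ) : ℂ) * t * Complex.I)
      = Complex.exp ((((2*π*lam : ℝ) : ℂ) * Complex.I) * t) := by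
    intro t; ring_nf
  rw [intervalIntegral.integral_congr (fun t _ => heq t), integral_exp_mul_complex hc]
  rw [norm_div]
  have h1 : ∀ s : ℝ, ‖Complex.exp ((((2*π*lam : ℝ) : ℂ) * Complex.I) * s)‖ ≤ 1 := by
    intro s
    have : (((2*π*lam : ℝ) : ℂ) * Complex.I) * s = ((2*π*lam*s : ℝ) : ℂ) * Complex.I := by
      push_cast; ring
    rw [this, Complex.norm_exp_ofReal_mul_I]
  have h2 : ‖(((2*π*lam : ℝ) : ℂ)) * Complex.I‖ = 2*π*|lam| := by
    rw [norm_mul, Complex.norm_I, Complex.norm_real, Real.norm_eq_abs, mul_one, abs_mul, abs_mul]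
    rw [abs_of_pos (by norm_num : (0:ℝ) < 2), abs_of_pos hπ]
  rw [h2]
  have hb : ‖Complex.exp ((((2*π*lam : ℝ) : ℂ) * Complex.I) * T)
      - Complex.exp ((((2*π*lam : ℝ) : ℂ) * Complex.I) * ((0:ℝ):ℂ))‖ ≤ 2 := by
    calc _ ≤ ‖_‖ + ‖_‖ := norm_sub_le _ _
    _ ≤ 2 := by
      have := h1 T; have := h1 0; linarith
  calc _ ≤ 2 / (2*π*|lam|) := by gcongr
  _ ≤ |lam|⁻¹ := by
    rw [div_le_iff₀ (by positivity)]
    have hinv : |lam|⁻¹ * |lam| = 1 := inv_mul_cancel₀ hlam.ne'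
    nlinarith [Real.pi_gt_three]

set_option maxHeartbeats 1000000 in
lemma kron {r : ℕ} (α : Fin r → ℝ)
    (hlin : ∀ n : Fin r → ℤ, ∑ i, (n i : ℝ) * α i = 0 → ∀ i, n i = 0)
    {q : ℝ} (hq0 : 0 ≤ q) (hq1 : q < 1) (T₀ : ℝ) (hT₀ : 0 ≤ T₀) :
    ∃ t, T₀ ≤ t ∧ ∀ i, q < Real.sin (π * α i * t) ^ 2 := by
  -- Step 1: choose N
  obtain ⟨N, hN1, hNq⟩ : ∃ N : ℕ, 1 ≤ N ∧ (N:ℝ)^r * q^N < (2*3^r : ℝ)⁻¹ := by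
    have h0 : Filter.Tendsto (fun n : ℕ => (n:ℝ)^r * q^n) Filter.atTop (nhds 0) :=
      tendsto_pow_const_mul_const_pow_of_lt_one r hq0 hq1
    have h2 : (0:ℝ) < (2*3^r : ℝ)⁻¹ := by positivity
    obtain ⟨n, hn, hn1⟩ := ((h0.eventually (gt_mem_nhds h2)).and
      (Filter.eventually_ge_atTop 1)).exists
    exact ⟨n, hn1, hn⟩
  have key : q^N * (2*(2*(N:ℝ)+1)^r) < 1 := by
    have h31 : (2*(N:ℝ)+1) ≤ 3*N := by
      have : (1:ℝ) ≤ (N:ℝ) := by exact_mod_cast hN1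
      linarith
    have h32 : (2*(N:ℝ)+1)^r ≤ (3:ℝ)^r * (N:ℝ)^r := by
      rw [← mul_pow]
      exact pow_le_pow_left₀ (by positivity) h31 r
    have hqN : (0:ℝ) ≤ q^N := by positivity
    have h33 : q^N * (2*(2*(N:ℝ)+1)^r) ≤ (2*3^r) * ((N:ℝ)^r * q^N) := by nlinarith
    have h34 : (2*3^r : ℝ) * ((N:ℝ)^r * q^N) < (2*3^r : ℝ) * (2*3^r : ℝ)⁻¹ := by
      apply mul_lt_mul_of_pos_left hNq (by positivity)
    rw [mul_inv_cancel₀ (by positivity : (2*3^r : ℝ) ≠ 0)] at h34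
    linarith
  -- Definitions
  set Λ : Finset (Fin r → ℕ) := Fintype.piFinset (fun _ => Finset.range (2*N+1)) with hΛ
  set A : ℕ → ℂ := fun k => (-1:ℂ)^(N+k) * ((2*N).choose k) / 4^N with hA
  set lam : (Fin r → ℕ) → ℝ := fun κ => ∑ i, ((N:ℝ) - κ i) * α i with hlam
  set g : ℝ → ℝ := fun t => ∏ i, Real.sin (π * α i * t) ^ (2*N) with hg
  set κ₀ : Fin r → ℕ := fun _ => N with hκ₀
  set cR : ℝ := (((2*N).choose N : ℝ) / 4^N)^r with hcRdef
  set C₀ : ℝ := ∑ κ ∈ Λ.erase κ₀, ‖∏ i, A (κ i)‖ * |lam κ|⁻¹ with hC₀def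
  have hgcont : Continuous g := by
    apply continuous_finset_prod
    intro i _
    exact (Real.continuous_sin.comp (continuous_const.mul continuous_id)).pow _
  have hκ₀Λ : κ₀ ∈ Λ := by
    simp [hΛ, hκ₀, Fintype.mem_piFinset]
    omega
  -- lam κ₀ = 0 and coefficients
  have hlamκ₀ : lam κ₀ = 0 := by simp [hlam, hκ₀]
  have hlamne : ∀ κ ∈ Λ.erase κ₀, lam κ ≠ 0 := by
    intro κ hκ hlam0
    have hκne := (Finset.mem_erase.mp hκ).1
    apply hκne
    have : ∀ i, ((N:ℤ) - κ i) = 0 := by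
      apply hlin
      rw [← hlam0, hlam]
      push_cast
      exact Finset.sum_congr rfl fun x _ => by ring
    funext i
    have := this i
    simp only [hκ₀]
    omega
  -- Expansion
  have expand : ∀ t : ℝ, ((g t : ℝ) : ℂ) = ∑ κ ∈ Λ, (∏ i, A (κ i)) *
      Complex.exp (((2*π*lam κ : ℝ) : ℂ) * t * Complex.I) := by
    intro t
    have h1 : ((g t : ℝ) : ℂ) = ∏ i, (Complex.sin ((π*α i*t : ℝ) : ℂ))^(2*N) := by
      rw [hg]; push_cast; rfl
    rw [h1]
    have h2 : ∀ i : Fin r, (Complex.sin ((π*α i*t : ℝ) : ℂ))^(2*N)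
        = ∑ k ∈ Finset.range (2*N+1), A k *
            Complex.exp ((2*(N:ℂ) - 2*k) * ((π*α i*t : ℝ) : ℂ) * Complex.I) := by
      intro i
      rw [sin_pow_expand N]
    rw [Finset.prod_congr rfl (fun i _ => h2 i), Finset.prod_univ_sum]
    refine Finset.sum_congr rfl fun κ hκ => ?_
    rw [Finset.prod_mul_distrib, ← Complex.exp_sum]
    congr 1
    have h3 : (2*π*lam κ : ℝ) = ∑ i, (2*(N:ℝ) - 2*κ i) * (π * α i) := by
      rw [hlam, Finset.mul_sum]
      exact Finset.sum_congr rfl fun i _ => by ring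
    rw [h3]
    push_cast
    rw [Finset.sum_mul, Finset.sum_mul]
    congr 1
    exact Finset.sum_congr rfl fun i _ => by push_cast; ring
  -- integral lower bound
  have hInt : ∀ T : ℝ, cR * T - C₀ ≤ ∫ t in (0:ℝ)..T, g t := by
    intro T
    have hccont : ∀ κ : Fin r → ℕ, Continuous (fun t : ℝ =>
        (∏ i, A (κ i)) * Complex.exp (((2*π*lam κ : ℝ) : ℂ) * t * Complex.I)) := by
      intro κ
      apply continuous_const.mul
      apply Complex.continuous_exp.comp
      exact (continuous_const.mul Complex.continuous_ofReal).mul continuous_const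
    have h1 : ((∫ t in (0:ℝ)..T, g t : ℝ) : ℂ) = ∑ κ ∈ Λ, (∏ i, A (κ i)) *
        ∫ t in (0:ℝ)..T, Complex.exp (((2*π*lam κ : ℝ) : ℂ) * t * Complex.I) := by
      rw [← intervalIntegral.integral_ofReal]
      rw [intervalIntegral.integral_congr (fun t _ => expand t)]
      rw [intervalIntegral.integral_finset_sum
        (fun κ _ => ((hccont κ).intervalIntegrable _ _))]
      exact Finset.sum_congr rfl fun κ _ => intervalIntegral.integral_const_mul _ _
    have hκ₀term : (∏ i, A (κ₀ i)) *
        (∫ t in (0:ℝ)..T, Complex.exp (((2*π*lam κ₀ : ℝ) : ℂ) * t * Complex.I))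
        = ((cR * T : ℝ) : ℂ) := by
      have e1 : ∀ i : Fin r, A (κ₀ i) = (((2*N).choose N : ℝ) / 4^N : ℝ) := by
        intro i
        simp only [hA, hκ₀]
        have : ((-1:ℂ))^(N+N) = 1 := Even.neg_one_pow ⟨N, rfl⟩
        rw [this]
        push_cast
        ring
      have e2 : (∏ i, A (κ₀ i)) = ((cR : ℝ) : ℂ) := by
        rw [Finset.prod_congr rfl (fun i _ => e1 i), Finset.prod_const, hcRdef]
        push_cast
        rw [Finset.card_univ, Fintype.card_fin]
      have e3 : (∫ t in (0:ℝ)..T, Complex.exp (((2*π*lam κ₀ : ℝ) : ℂ) * t * Complex.I))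
          = ((T:ℝ):ℂ) := by
        rw [hlamκ₀]
        norm_num
      rw [e2, e3]
      push_cast
      ring
    have h2 : ((∫ t in (0:ℝ)..T, g t : ℝ) : ℂ) - ((cR * T : ℝ) : ℂ) = ∑ κ ∈ Λ.erase κ₀,
        (∏ i, A (κ i)) *
          ∫ t in (0:ℝ)..T, Complex.exp (((2*π*lam κ : ℝ) : ℂ) * t * Complex.I) := by
      rw [h1, ← hκ₀term, ← Finset.add_sum_erase Λ _ hκ₀Λ]
      ring
    have h3 : |(∫ t in (0:ℝ)..T, g t) - cR * T| ≤ C₀ := by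
      have := congrArg (‖·‖) h2
      rw [← Complex.ofReal_sub, Complex.norm_real, Real.norm_eq_abs] at this
      rw [this, hC₀def]
      refine le_trans (norm_sum_le _ _) (Finset.sum_le_sum fun κ hκ => ?_)
      rw [norm_mul]
      exact mul_le_mul_of_nonneg_left (abs_integral_cexp (hlamne κ hκ) T)
        (norm_nonneg _)
    have := abs_le.mp h3
    linarith [this.1]
  -- choose T and find t
  have hcR : 0 < cR := by
    have : (0:ℝ) < ((2*N).choose N : ℝ) := by
      exact_mod_cast Nat.choose_pos (by omega)
    positivity
  have hC₀ : 0 ≤ C₀ := by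
    apply Finset.sum_nonneg
    intro κ _
    positivity
  set T : ℝ := (2/cR)*(C₀ + T₀ + 1) + T₀ with hT
  have hTT₀ : T₀ ≤ T := by
    have h : 0 ≤ (2/cR)*(C₀ + T₀ + 1) := by positivity
    rw [hT]
    linarith
  have hg01 : ∀ t : ℝ, 0 ≤ g t ∧ g t ≤ 1 := by
    intro t
    constructor
    · apply Finset.prod_nonneg; intro i _
      rw [pow_mul]; positivity
    · apply Finset.prod_le_one
      · intro i _; rw [pow_mul]; positivity
      · intro i _; rw [pow_mul]
        exact pow_le_one₀ (sq_nonneg _) (Real.sin_sq_le_one _)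
  obtain ⟨t, ht0, htg⟩ : ∃ t, t ∈ Set.Icc T₀ T ∧ cR/2 ≤ g t := by
    by_contra hcon
    push_neg at hcon
    have hint1 : IntervalIntegrable g MeasureTheory.volume 0 T₀ :=
      hgcont.intervalIntegrable _ _
    have hint2 : IntervalIntegrable g MeasureTheory.volume T₀ T :=
      hgcont.intervalIntegrable _ _
    have hsplit : (∫ s in (0:ℝ)..T₀, g s) + (∫ s in T₀..T, g s) = ∫ s in (0:ℝ)..T, g s :=
      intervalIntegral.integral_add_adjacent_intervals hint1 hint2
    have hb1 : (∫ s in (0:ℝ)..T₀, g s) ≤ T₀ := by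
      calc (∫ s in (0:ℝ)..T₀, g s) ≤ ∫ _ in (0:ℝ)..T₀, (1:ℝ) := by
            apply intervalIntegral.integral_mono_on hT₀ hint1
              (intervalIntegrable_const)
            intro s _; exact (hg01 s).2
      _ = T₀ := by simp
    have hb2 : (∫ s in T₀..T, g s) ≤ (cR/2) * (T - T₀) := by
      calc (∫ s in T₀..T, g s) ≤ ∫ _ in T₀..T, (cR/2 : ℝ) := by
            apply intervalIntegral.integral_mono_on hTT₀ hint2
              (intervalIntegrable_const)
            intro s hs; exact le_of_lt (hcon s hs)
      _ = (cR/2) * (T - T₀) := by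
        rw [intervalIntegral.integral_const, smul_eq_mul]; ring
    have := hInt T
    have hTval : cR * T = cR * T₀ + 2*(C₀ + T₀ + 1) := by
      rw [hT]; field_simp; ring
    have h8 : (∫ s in (0:ℝ)..T, g s) ≤ T₀ + cR/2*(T-T₀) := by
      rw [← hsplit]; linarith
    have h7 : cR * T - C₀ ≤ T₀ + cR/2*(T-T₀) := le_trans this h8
    nlinarith [mul_nonneg hcR.le hT₀, hTval, h7]
  refine ⟨t, ht0.1, fun i => ?_⟩
  -- per-factor bound
  have hfac : g t ≤ (Real.sin (π * α i * t) ^ 2) ^ N := by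
    rw [← pow_mul]
    calc g t = Real.sin (π * α i * t) ^ (2*N) *
          ∏ j ∈ Finset.univ.erase i, Real.sin (π * α j * t) ^ (2*N) :=
        (Finset.mul_prod_erase Finset.univ _ (Finset.mem_univ i)).symm
    _ ≤ Real.sin (π * α i * t) ^ (2*N) := by
        apply mul_le_of_le_one_right
        · rw [pow_mul]; positivity
        · apply Finset.prod_le_one
          · intro j _; rw [pow_mul]; positivity
          · intro j _; rw [pow_mul]
            exact pow_le_one₀ (sq_nonneg _) (Real.sin_sq_le_one _)
  have hcmp : q ^ N < (Real.sin (π * α i * t) ^ 2) ^ N := by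
    have h1 : q^N < cR/2 := by
      have hch : (4:ℝ)^N ≤ (2*(N:ℝ)+1) * ((2*N).choose N : ℝ) := by
        exact_mod_cast Nat.four_pow_le_two_mul_add_one_mul_central_binom N
      have h2N : (0:ℝ) < (2*(N:ℝ)+1) := by positivity
      have hcRlb : ((2*(N:ℝ)+1))⁻¹^r ≤ cR := by
        rw [hcRdef]
        apply pow_le_pow_left₀ (by positivity)
        have h4 : (0:ℝ) < 4^N := by positivity
        rw [inv_eq_one_div, div_le_div_iff₀ h2N h4]
        linarith
      have h2 : q^N < ((2*(N:ℝ)+1)^r)⁻¹/2 := by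
        have e : ((2*(N:ℝ)+1)^r)⁻¹/2 = 1/(2*(2*(N:ℝ)+1)^r) := by
          rw [one_div, mul_inv]; ring
        rw [e, lt_div_iff₀ (by positivity)]
        exact key
      have h3 : ((2*(N:ℝ)+1)^r)⁻¹ ≤ cR := by rw [← inv_pow]; exact hcRlb
      linarith
    calc q^N < cR/2 := h1
    _ ≤ g t := htg
    _ ≤ _ := hfac
  have := lt_of_pow_lt_pow_left₀ N (sq_nonneg _) hcmp
  exact this


/-- Abstract form of the lemma underlying Theorem 1.8: with `1/Δ₁, …, 1/Δ_r`
`ℚ`-linearly independent and `|μ_i(k) − kΔ_i| < c` for all positive `k`, one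
can find odd positive integers `k₁, …, k_r` such that all `μ_i(k_i)` lie
within `2c + ε` of each other. -/
theorem perfect_reeb_stmt10 (r : ℕ) (hr : 1 ≤ r) (c ε : ℝ) (hc : 0 < c)
    (hε : 0 < ε) (Δ : Fin r → ℝ) (hΔ : ∀ i, 0 < Δ i)
    (hind : LinearIndependent ℚ (fun i : Fin r => (Δ i)⁻¹))
    (μ : Fin r → ℕ → ℤ)
    (hμ : ∀ i, ∀ k : ℕ, 0 < k → |(μ i k : ℝ) - (k : ℝ) * Δ i| < c) :
    ∃ k : Fin r → ℕ, (∀ i, Odd (k i)) ∧ (∀ i, 0 < k i) ∧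
      ∀ i j, |(μ i (k i) : ℝ) - (μ j (k j) : ℝ)| < 2 * c + ε := by
  have hne : Nonempty (Fin r) := ⟨⟨0, hr⟩⟩
  set α : Fin r → ℝ := fun i => (2 * Δ i)⁻¹ with hαdef
  have hlin : ∀ n : Fin r → ℤ, ∑ i, (n i : ℝ) * α i = 0 → ∀ i, n i = 0 := by
    intro n hsum i
    have h2 : (2:ℝ)⁻¹ * ∑ j, (n j : ℝ) * (Δ j)⁻¹ = 0 := by
      rw [Finset.mul_sum, ← hsum]
      refine Finset.sum_congr rfl fun j _ => ?_
      simp only [hαdef]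
      rw [mul_inv]
      ring
    have h3 : ∑ j, (n j : ℝ) * (Δ j)⁻¹ = 0 := by
      rcases mul_eq_zero.mp h2 with h | h
      · norm_num at h
      · exact h
    have h4 := Fintype.linearIndependent_iff.mp hind (fun j => (n j : ℚ)) ?_ i
    · exact_mod_cast h4
    · rw [← h3]
      refine Finset.sum_congr rfl fun j _ => ?_
      rw [Rat.smul_def]
      push_cast
      ring
  -- bounds on Δ
  set E : ℝ := Finset.univ.sup' Finset.univ_nonempty (fun i => Δ i) with hEdef
  have hER : ∀ i, Δ i ≤ E := fun i => Finset.le_sup' _ (Finset.mem_univ i)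
  have hE0 : 0 < E := lt_of_lt_of_le (hΔ (Classical.arbitrary _)) (hER _)
  -- parameters for kron
  set δ' : ℝ := min (1/2) ((ε/(4*E))^2 * 4) with hδ'def
  have hδ'0 : 0 < δ' := by
    apply lt_min (by norm_num)
    positivity
  have hδ'1 : δ' ≤ 1/2 := min_le_left _ _
  obtain ⟨t, htT₀, hsin⟩ := kron α hlin (q := 1 - δ')
    (by linarith) (by linarith) (2*E) (by positivity)
  -- construct k
  have hkey : ∀ i, ∃ ki : ℕ, Odd ki ∧ 0 < ki ∧ |(ki : ℝ) * Δ i - t| ≤ ε/2 := by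
    intro i
    set s : ℝ := α i * t with hsdef
    set m : ℤ := round (s - 1/2) with hmdef
    set θ : ℝ := s - 1/2 - m with hθdef
    have hθhalf : |θ| ≤ 1/2 := by
      rw [hθdef, hmdef]
      exact abs_sub_round _
    have hs1 : 1 ≤ s := by
      rw [hsdef, hαdef]
      rw [inv_mul_eq_div, le_div_iff₀ (by have := hΔ i; linarith)]
      have := hER i
      linarith
    -- sin² = cos²(πθ)
    have hsineq : Real.sin (π * α i * t) ^ 2 = Real.cos (π * θ) ^ 2 := by
      have harg : π * α i * t = (π * θ + π/2) + m * π := by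
        rw [hθdef, hsdef]
        push_cast
        ring
      rw [harg, Real.sin_add_int_mul_pi, Real.sin_add_pi_div_two]
      rw [mul_pow]
      rcases Int.even_or_odd m with he | ho
      · rw [he.neg_one_zpow]; norm_num
      · rw [Odd.neg_one_zpow ho]; norm_num
    have hcos2 := hsin i
    rw [hsineq] at hcos2
    have hsin2 : Real.sin (π * θ) ^ 2 < δ' := by
      have := Real.sin_sq_add_cos_sq (π * θ)
      linarith
    -- Jordan
    have hjord : 2 * |θ| ≤ Real.sin (π * |θ|) := by
      have h1 : 0 ≤ π * |θ| := by positivity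
      have h2 : π * |θ| ≤ π / 2 := by
        have := mul_le_mul_of_nonneg_left hθhalf Real.pi_pos.le
        linarith
      have := Real.mul_le_sin h1 h2
      have hπ0 : π ≠ 0 := Real.pi_ne_zero
      calc 2 * |θ| = 2/π * (π * |θ|) := by field_simp
      _ ≤ Real.sin (π * |θ|) := this
    have hsinabs : Real.sin (π * |θ|) ^ 2 = Real.sin (π * θ) ^ 2 := by
      rcases abs_cases θ with ⟨h, _⟩ | ⟨h, _⟩
      · rw [h]
      · rw [h, mul_neg, Real.sin_neg, neg_sq]
    have hθsq : (2*|θ|)^2 < δ' := by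
      calc (2*|θ|)^2 ≤ Real.sin (π * |θ|) ^ 2 := by
            apply pow_le_pow_left₀ (by positivity) hjord
      _ = Real.sin (π * θ) ^ 2 := hsinabs
      _ < δ' := hsin2
    have hθfin : |θ| < ε/(4*E) := by
      have hd2 : δ' ≤ (ε/(4*E))^2 * 4 := min_le_right _ _
      have h5 : |θ|^2 < (ε/(4*E))^2 := by nlinarith [hθsq, hd2]
      exact lt_of_pow_lt_pow_left₀ 2 (by positivity) h5
    -- m ≥ 0
    have hm0 : 0 ≤ m := by
      have : (m : ℝ) = (s - 1/2) - θ := by rw [hθdef]; ring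
      have hmr : (0:ℝ) ≤ (m:ℝ) := by
        have h1 : θ ≤ 1/2 := le_trans (le_abs_self θ) hθhalf
        rw [this]; linarith
      exact_mod_cast hmr
    have hkval : ((2 * m.toNat + 1 : ℕ) : ℝ) = 2 * (m:ℝ) + 1 := by
      have h6 : ((m.toNat : ℕ) : ℝ) = (m : ℝ) := by
        exact_mod_cast congrArg (Int.cast : ℤ → ℝ) (Int.toNat_of_nonneg hm0)
      push_cast
      rw [h6]
    refine ⟨2 * m.toNat + 1, ⟨m.toNat, rfl⟩, by omega, ?_⟩
    have hΔi := hΔ i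
    have hΔE := hER i
    have hexp : ((2 * m.toNat + 1 : ℕ) : ℝ) * Δ i - t = -(2 * Δ i * θ) := by
      rw [hkval, hθdef, hsdef, hαdef]
      field_simp
      ring
    rw [hexp, abs_neg, abs_mul, abs_of_pos (by linarith : (0:ℝ) < 2 * Δ i)]
    calc 2 * Δ i * |θ| ≤ 2 * E * |θ| := by
          apply mul_le_mul_of_nonneg_right _ (abs_nonneg θ)
          linarith
    _ ≤ 2 * E * (ε/(4*E)) := by
          apply mul_le_mul_of_nonneg_left (le_of_lt hθfin) (by linarith)
    _ = ε/2 := by field_simp; ring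
  choose k hodd hpos hclose using hkey
  refine ⟨k, hodd, hpos, fun i j => ?_⟩
  have hi := hμ i (k i) (hpos i)
  have hj := hμ j (k j) (hpos j)
  have hti := hclose i
  have htj := hclose j
  rw [abs_lt] at hi hj ⊢
  rw [abs_le] at hti htj
  constructor <;> [nlinarith [hi.1, hi.2, hj.1, hj.2, hti.1, hti.2, htj.1, htj.2];
    nlinarith [hi.1, hi.2, hj.1, hj.2, hti.1, hti.2, htj.1, htj.2]]
end
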